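/- (Plane wave reflected off the unit sphere.) Define F₂ : ℂ → ℂ by F₂(ξ) = −(1/2)ξ√(1 + ξξ̄) and r₂ : ℂ → ℝ by r₂(ξ) = 2/√(1 + ξξ̄). Then for every ξ ∈ ℂ, r₂ is real-differentiable at ξ and ∂̄r₂(ξ) = 2F₂(ξ)/(1 + ξξ̄)²; i.e. r₂ is a potential function for the line congruence (ξ, F₂(ξ)), which is the reflection of a plane wave moving down the x³-axis off the unit sphere centred at the origin (twistor function F₀ = 0, potential r₀ = 1). -/

import Mathlib

open ComplexConjugate

/-- The conjugate Wirtinger derivative `∂̄f` of a real-differentiable `f : ℂ → ℂ`. -/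
noncomputable def wirtDbar (f : ℂ → ℂ) (ν : ℂ) : ℂ :=
  (1 / 2) * (fderiv ℝ f ν 1 + Complex.I * fderiv ℝ f ν Complex.I)

noncomputable def sqL (ξ : ℂ) : ℂ →L[ℝ] ℝ :=
  (2 * ξ.re) • Complex.reCLM + (2 * ξ.im) • Complex.imCLM

lemma hasFDerivAt_normSq' (ξ : ℂ) :
    HasFDerivAt (fun w : ℂ => Complex.normSq w) (sqL ξ) ξ := by
  have h : (fun w : ℂ => Complex.normSq w) = fun w : ℂ => w.re * w.re + w.im * w.im := by
    funext w; simp [Complex.normSq_apply]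
  rw [h]
  have hre := Complex.reCLM.hasFDerivAt (x := ξ)
  have him := Complex.imCLM.hasFDerivAt (x := ξ)
  have := (hre.mul hre).add (him.mul him)
  refine this.congr_fderiv ?_
  ext v
  simp [sqL]
  ring

/-- Plane wave reflected off the unit sphere: the function
`r₂(ξ) = 2/√(1 + ξξ̄)` is a potential function for the line congruence
`ξ ↦ (ξ, F₂(ξ))` with `F₂(ξ) = −½ξ√(1 + ξξ̄)`, i.e. `r₂` is real-differentiable
and `∂̄r₂ = 2F₂/(1 + ξξ̄)²` everywhere. -/
theorem plane_wave_off_unit_sphere_potential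
    (F₂ : ℂ → ℂ) (r₂ : ℂ → ℝ)
    (hF₂ : ∀ ξ : ℂ, F₂ ξ = -(1 / 2) * ξ * (Real.sqrt (1 + Complex.normSq ξ) : ℂ))
    (hr₂ : ∀ ξ : ℂ, r₂ ξ = 2 / Real.sqrt (1 + Complex.normSq ξ)) :
    ∀ ξ : ℂ,
      DifferentiableAt ℝ r₂ ξ ∧
      wirtDbar (fun w => (r₂ w : ℂ)) ξ = 2 * F₂ ξ / (1 + ξ * conj ξ) ^ 2 := by
  intro ξ
  set t : ℝ := 1 + Complex.normSq ξ with ht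
  have htpos : 0 < t := by have := Complex.normSq_nonneg ξ; simp only [ht]; linarith
  set s : ℝ := Real.sqrt t with hsdef
  have hspos : 0 < s := Real.sqrt_pos.mpr htpos
  have hs2 : s ^ 2 = t := Real.sq_sqrt htpos.le
  have h1 : HasFDerivAt (fun w : ℂ => 1 + Complex.normSq w) (sqL ξ) ξ :=
    (hasFDerivAt_normSq' ξ).const_add 1
  have h2 : HasDerivAt Real.sqrt (1 / (2 * s)) t := Real.hasDerivAt_sqrt htpos.ne'
  have h3 : HasFDerivAt (fun w : ℂ => Real.sqrt (1 + Complex.normSq w))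
      ((1 / (2 * s)) • sqL ξ) ξ := h2.comp_hasFDerivAt ξ h1
  have h4 : HasFDerivAt (fun w : ℂ => (Real.sqrt (1 + Complex.normSq w))⁻¹)
      (-(s ^ 2)⁻¹ • ((1 / (2 * s)) • sqL ξ)) ξ := (hasDerivAt_inv hspos.ne').comp_hasFDerivAt ξ h3
  have h5 : HasFDerivAt r₂ ((2 : ℝ) • (-(s ^ 2)⁻¹ • ((1 / (2 * s)) • sqL ξ))) ξ := by
    have := h4.const_smul (2 : ℝ)
    have hf : r₂ = (2 : ℝ) • fun w : ℂ => (Real.sqrt (1 + Complex.normSq w))⁻¹ := by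
      funext w
      rw [hr₂ w]
      simp [div_eq_mul_inv]
    rw [hf]; exact this
  refine ⟨h5.differentiableAt, ?_⟩
  have h6 : HasFDerivAt (fun w : ℂ => ((r₂ w : ℂ)))
      (Complex.ofRealCLM.comp ((2 : ℝ) • (-(s ^ 2)⁻¹ • ((1 / (2 * s)) • sqL ξ)))) ξ :=
    Complex.ofRealCLM.hasFDerivAt.comp ξ h5
  rw [wirtDbar, h6.fderiv, hF₂ ξ]
  have hval1 : sqL ξ 1 = 2 * ξ.re := by simp [sqL]
  have hvalI : sqL ξ Complex.I = 2 * ξ.im := by simp [sqL]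
  simp only [ContinuousLinearMap.comp_apply, ContinuousLinearMap.smul_apply, hval1, hvalI,
    Complex.ofRealCLM_apply, smul_eq_mul]
  rw [Complex.mul_conj]
  have hsC : (s : ℂ) ≠ 0 := by exact_mod_cast hspos.ne'
  have htC : ((t : ℝ) : ℂ) ≠ 0 := by exact_mod_cast htpos.ne'
  have hs2C : (s : ℂ) ^ 2 = (t : ℂ) := by exact_mod_cast hs2
  have hξ : (ξ.re : ℂ) + (ξ.im : ℂ) * Complex.I = ξ := Complex.re_add_im ξ
  have hcast : ((1 : ℂ) + (Complex.normSq ξ : ℂ)) = (t : ℂ) := by push_cast [ht]; ring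
  rw [show ((Real.sqrt (1 + Complex.normSq ξ) : ℝ) : ℂ) = (s : ℂ) from rfl, hcast]
  have key : ∀ x : ℝ, 2 * (-(s ^ 2)⁻¹ * (1 / (2 * s) * (2 * x))) = -2 * x / s ^ 3 := by
    intro x
    field_simp
  rw [key, key]
  push_cast
  rw [← hs2C]
  clear_value s t
  field_simp
  linear_combination (-1 : ℂ) * hξ
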